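/- Let losses ℓ_t^k ∈ [0,1] for t = 1,...,T and k = 1,...,K, let η ∈ (0,1], and define Hedge weights w_t^k = e^{-η L_{t-1}^k}/Σ_{k'} e^{-η L_{t-1}^{k'}}, where L_t^k = Σ_{s≤t} ℓ_s^k. Then the cumulative mixability gap Δ_T(η) = Σ_{t=1}^T (w_t·ℓ_t + (1/η)ln(w_t·e^{-ηℓ_t})) satisfies Δ_T(η) ≤ (η L_T^* + ln K)/(e−1), where L_T^* = min_k L_T^k. -/

import Mathlib

lemma hedge_hasDerivAt {y : ℝ} (hy : 0 < y) :
    HasDerivAt (fun z : ℝ => (1 - Real.exp (-z))⁻¹ - z⁻¹)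
      (-Real.exp (-y) / (1 - Real.exp (-y)) ^ 2 - -1 / y ^ 2) y := by
  have hne : 1 - Real.exp (-y) ≠ 0 := by
    have : Real.exp (-y) < 1 := Real.exp_lt_one_iff.2 (by linarith)
    linarith
  have h1 : HasDerivAt (fun z : ℝ => 1 - Real.exp (-z)) (Real.exp (-y)) y := by
    have h := (Real.hasDerivAt_exp (-y)).comp y (hasDerivAt_neg y)
    have := (hasDerivAt_const y (1:ℝ)).sub h
    simpa [Function.comp_def, Pi.sub_def] using this
  have h2 := h1.inv hne
  have h3 : HasDerivAt (fun z : ℝ => z⁻¹) (-1 / y ^ 2) y := by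
    simpa [Pi.inv_def] using (hasDerivAt_id y).inv (ne_of_gt hy)
  exact h2.sub h3

lemma hedge_core {x : ℝ} (h1 : 0 < x) (h2 : x ≤ 1) :
    (1 - Real.exp (-x))⁻¹ - x⁻¹ ≤ (Real.exp 1 - 1)⁻¹ := by
  have key : ∀ y : ℝ, 0 < y → 0 ≤ -Real.exp (-y) / (1 - Real.exp (-y)) ^ 2 - -1 / y ^ 2 := by
    intro y hy
    have he1 : Real.exp (-y) < 1 := Real.exp_lt_one_iff.2 (by linarith)
    have hpos : 0 < 1 - Real.exp (-y) := by linarith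
    have hsinh : y / 2 < Real.sinh (y / 2) := Real.self_lt_sinh_iff.2 (by linarith)
    rw [Real.sinh_eq] at hsinh
    have hstep : y * Real.exp (-(y/2)) ≤ 1 - Real.exp (-y) := by
      have hmul := mul_lt_mul_of_pos_right (by linarith : y < Real.exp (y/2) - Real.exp (-(y/2)))
        (Real.exp_pos (-(y/2)))
      have e1 : Real.exp (y/2) * Real.exp (-(y/2)) = 1 := by
        rw [← Real.exp_add]; norm_num
      have e2 : Real.exp (-(y/2)) * Real.exp (-(y/2)) = Real.exp (-y) := by
        rw [← Real.exp_add]; ring_nf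
      nlinarith [Real.exp_pos (-(y/2))]
    have hsq : y ^ 2 * Real.exp (-y) ≤ (1 - Real.exp (-y)) ^ 2 := by
      have hnn : 0 ≤ y * Real.exp (-(y/2)) := by positivity
      have e2 : Real.exp (-(y/2)) * Real.exp (-(y/2)) = Real.exp (-y) := by
        rw [← Real.exp_add]; ring_nf
      nlinarith [hstep, hnn]
    have hdiv : Real.exp (-y) / (1 - Real.exp (-y)) ^ 2 ≤ 1 / y ^ 2 := by
      rw [div_le_div_iff₀ (by positivity) (by positivity)]
      nlinarith [hsq]
    rw [neg_div, neg_div, sub_neg_eq_add]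
    linarith
  have mono : MonotoneOn (fun z : ℝ => (1 - Real.exp (-z))⁻¹ - z⁻¹) (Set.Icc x 1) := by
    apply monotoneOn_of_deriv_nonneg (convex_Icc x 1)
    · intro y hy
      exact (hedge_hasDerivAt (lt_of_lt_of_le h1 hy.1)).continuousAt.continuousWithinAt
    · rw [interior_Icc]
      intro y hy
      exact (hedge_hasDerivAt (lt_trans h1 hy.1)).differentiableAt.differentiableWithinAt
    · rw [interior_Icc]
      intro y hy
      rw [(hedge_hasDerivAt (lt_trans h1 hy.1)).deriv]
      exact key y (lt_trans h1 hy.1)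
  have hle := mono (Set.mem_Icc.2 ⟨le_refl x, h2⟩) (Set.mem_Icc.2 ⟨h2, le_refl 1⟩) h2
  have hf1 : (1 - Real.exp (-(1:ℝ)))⁻¹ - (1:ℝ)⁻¹ = (Real.exp 1 - 1)⁻¹ := by
    have he : (1:ℝ) < Real.exp 1 := Real.one_lt_exp_iff.2 one_pos
    have he0 : Real.exp 1 ≠ 0 := by positivity
    have hne : Real.exp 1 - 1 ≠ 0 := by linarith
    rw [Real.exp_neg]
    rw [show (1:ℝ) - (Real.exp 1)⁻¹ = (Real.exp 1 - 1)/Real.exp 1 by field_simp, inv_div]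
    rw [inv_one, div_sub_one hne]
    ring_nf
  simp only at hle
  rw [hf1] at hle
  exact hle

theorem cumulative_mixability_gap_bound (K T : ℕ) (hK : 0 < K)
    (ℓ : ℕ → Fin K → ℝ) (η : ℝ) (hη : η ∈ Set.Ioc (0:ℝ) 1)
    (hℓ : ∀ t k, ℓ t k ∈ Set.Icc (0:ℝ) 1)
    (L : ℕ → Fin K → ℝ) (hL : ∀ t k, L t k = ∑ s ∈ Finset.range t, ℓ s k)
    (w : ℕ → Fin K → ℝ)
    (hw : ∀ t k, w t k = Real.exp (-η * L t k) / ∑ k', Real.exp (-η * L t k'))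
    (Lstar : ℝ) (hLstar : Lstar = Finset.univ.inf' (Finset.univ_nonempty_iff.2 ⟨⟨0, hK⟩⟩) (L T)) :
    (∑ t ∈ Finset.range T,
        ((∑ k, w t k * ℓ t k) + (1/η) * Real.log (∑ k, w t k * Real.exp (-η * ℓ t k))))
      ≤ (η * Lstar + Real.log K) / (Real.exp 1 - 1) := by
  obtain ⟨hη0, hη1⟩ := hη
  haveI : Nonempty (Fin K) := ⟨⟨0, hK⟩⟩
  set S : ℕ → ℝ := fun t => ∑ k, Real.exp (-η * L t k) with hSdef
  have hSpos : ∀ t, 0 < S t := fun t =>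
    Finset.sum_pos (fun k _ => Real.exp_pos _) Finset.univ_nonempty
  have hwnn : ∀ t k, 0 ≤ w t k := by
    intro t k; rw [hw]
    exact div_nonneg (Real.exp_nonneg _) (hSpos t).le
  have hsumw : ∀ t, ∑ k, w t k = 1 := by
    intro t
    simp only [hw]
    rw [← Finset.sum_div]
    exact div_self (hSpos t).ne'
  have hLsucc : ∀ t k, L (t+1) k = L t k + ℓ t k := by
    intro t k; rw [hL, hL, Finset.sum_range_succ]
  have key : ∀ t, ∑ k, w t k * Real.exp (-η * ℓ t k) = S (t+1) / S t := by
    intro t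
    have hterm : ∀ k : Fin K, w t k * Real.exp (-η * ℓ t k)
        = Real.exp (-η * L (t+1) k) / S t := by
      intro k
      rw [hw, hLsucc, div_mul_eq_mul_div, ← Real.exp_add]
      congr 2
      ring
    rw [Finset.sum_congr rfl (fun k _ => hterm k), ← Finset.sum_div]
  have hc : 0 < 1 - Real.exp (-η) := by
    have : Real.exp (-η) < 1 := Real.exp_lt_one_iff.2 (by linarith)
    linarith
  -- per-step bound
  have step : ∀ t, (∑ k, w t k * ℓ t k)
      + (1/η) * Real.log (∑ k, w t k * Real.exp (-η * ℓ t k))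
      ≤ (Real.exp 1 - 1)⁻¹ * (Real.log (S t) - Real.log (S (t+1))) := by
    intro t
    set c : ℝ := 1 - Real.exp (-η) with hcdef
    set E : ℝ := ∑ k, w t k * ℓ t k with hEdef
    set P : ℝ := ∑ k, w t k * Real.exp (-η * ℓ t k) with hPdef
    have hE0 : 0 ≤ E := Finset.sum_nonneg fun k _ =>
      mul_nonneg (hwnn t k) (hℓ t k).1
    have hPpos : 0 < P := Finset.sum_pos
      (fun k _ => mul_pos (by rw [hw]; exact div_pos (Real.exp_pos _) (hSpos t))
        (Real.exp_pos _)) Finset.univ_nonempty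
    have hpoint : ∀ k : Fin K, Real.exp (-η * ℓ t k) ≤ 1 - c * ℓ t k := by
      intro k
      obtain ⟨hx0, hx1⟩ := hℓ t k
      have hcvx := convexOn_exp.2 (Set.mem_univ (-η)) (Set.mem_univ (0:ℝ))
        hx0 (by linarith : (0:ℝ) ≤ 1 - ℓ t k) (by ring)
      have harg : ℓ t k • (-η) + (1 - ℓ t k) • (0:ℝ) = -η * ℓ t k := by
        simp [smul_eq_mul]; ring
      rw [harg] at hcvx
      simp only [smul_eq_mul, Real.exp_zero] at hcvx
      have : ℓ t k * Real.exp (-η) + (1 - ℓ t k) * 1 = 1 - c * ℓ t k := by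
        rw [hcdef]; ring
      linarith
    have hEP : P ≤ 1 - c * E := by
      have h1 : P ≤ ∑ k, w t k * (1 - c * ℓ t k) :=
        Finset.sum_le_sum fun k _ =>
          mul_le_mul_of_nonneg_left (hpoint k) (hwnn t k)
      have h2 : ∑ k, w t k * (1 - c * ℓ t k) = 1 - c * E := by
        rw [hEdef, Finset.mul_sum]
        rw [show (∑ k, w t k * (1 - c * ℓ t k))
          = ∑ k, (w t k - c * (w t k * ℓ t k)) from Finset.sum_congr rfl fun k _ => by ring]
        rw [Finset.sum_sub_distrib, hsumw, ← Finset.mul_sum]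
      linarith
    have hP1 : P ≤ 1 := by nlinarith
    have hA0 : 0 ≤ -Real.log P := by
      have := Real.log_nonpos hPpos.le hP1
      linarith
    have hlogP : Real.log P ≤ -(c * E) := by
      have h3 : P ≤ Real.exp (-(c * E)) := by
        have := Real.add_one_le_exp (-(c * E))
        linarith
      calc Real.log P ≤ Real.log (Real.exp (-(c * E))) :=
            (Real.log_le_log_iff hPpos (Real.exp_pos _)).2 h3
        _ = -(c * E) := Real.log_exp _
    have hEle : E ≤ (-Real.log P) * c⁻¹ := by
      rw [← div_eq_mul_inv, le_div_iff₀ hc]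
      linarith
    have hfc := hedge_core hη0 hη1
    have hmul := mul_le_mul_of_nonneg_left hfc hA0
    have hgoal : E + (1/η) * Real.log P ≤ (Real.exp 1 - 1)⁻¹ * (-Real.log P) := by
      have hid : (1/η) * Real.log P = -((-Real.log P) * η⁻¹) := by
        field_simp
      rw [hid]
      nlinarith [hmul, hEle]
    have hlogdiv : Real.log P = Real.log (S (t+1)) - Real.log (S t) := by
      rw [hPdef, key t, Real.log_div (hSpos (t+1)).ne' (hSpos t).ne']
    rw [hlogdiv] at hgoal
    have hrw : -(Real.log (S (t+1)) - Real.log (S t))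
        = Real.log (S t) - Real.log (S (t+1)) := by ring
    rw [hrw] at hgoal
    rw [hlogdiv]
    exact hgoal
  -- sum up
  have hsum : (∑ t ∈ Finset.range T,
        ((∑ k, w t k * ℓ t k) + (1/η) * Real.log (∑ k, w t k * Real.exp (-η * ℓ t k))))
      ≤ (Real.exp 1 - 1)⁻¹ * (Real.log (S 0) - Real.log (S T)) := by
    calc _ ≤ ∑ t ∈ Finset.range T,
          (Real.exp 1 - 1)⁻¹ * (Real.log (S t) - Real.log (S (t+1))) :=
        Finset.sum_le_sum fun t _ => step t
      _ = (Real.exp 1 - 1)⁻¹ * ∑ t ∈ Finset.range T,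
          (Real.log (S t) - Real.log (S (t+1))) := by rw [Finset.mul_sum]
      _ = (Real.exp 1 - 1)⁻¹ * (Real.log (S 0) - Real.log (S T)) := by
          rw [Finset.sum_range_sub' (fun t => Real.log (S t))]
  have hS0 : S 0 = K := by
    have : ∀ k : Fin K, L 0 k = 0 := fun k => by rw [hL]; simp
    simp [hSdef, this]
  have hST : Real.exp (-η * Lstar) ≤ S T := by
    obtain ⟨k0, _, hk0⟩ := Finset.exists_mem_eq_inf'
      (Finset.univ_nonempty_iff.2 ⟨⟨0, hK⟩⟩) (L T)
    rw [hLstar, hk0]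
    have : Real.exp (-η * L T k0) ≤ ∑ k, Real.exp (-η * L T k) :=
      Finset.single_le_sum (f := fun k => Real.exp (-η * L T k))
        (fun k _ => Real.exp_nonneg _) (Finset.mem_univ k0)
    exact this
  have hlogST : -η * Lstar ≤ Real.log (S T) := by
    calc -η * Lstar = Real.log (Real.exp (-η * Lstar)) := (Real.log_exp _).symm
      _ ≤ Real.log (S T) := (Real.log_le_log_iff (Real.exp_pos _) (hSpos T)).2 hST
  have he1 : (1:ℝ) < Real.exp 1 := Real.one_lt_exp_iff.2 one_pos
  have hinv : (0:ℝ) ≤ (Real.exp 1 - 1)⁻¹ := inv_nonneg.2 (by linarith)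
  calc _ ≤ (Real.exp 1 - 1)⁻¹ * (Real.log (S 0) - Real.log (S T)) := hsum
    _ ≤ (Real.exp 1 - 1)⁻¹ * (η * Lstar + Real.log K) := by
        apply mul_le_mul_of_nonneg_left _ hinv
        rw [hS0]
        linarith
    _ = (η * Lstar + Real.log K) / (Real.exp 1 - 1) := by
        rw [div_eq_mul_inv, mul_comm]
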